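/- Let q ≥ 2, ν > 0, let z ∈ ℂ be nonzero, and let s ∈ ZMod q. If W and W' are independent complex Gaussian random variables CN(0, ν²), then the probability that arg_q( (z·ω^s + W') / (z + W) ) ≠ s is at most 2·exp( −|z|²·sin²(π/(2q)) / (2ν²) ). (This is the per-offset symbol error bound of Proposition 2: with |z|² = ρ², ν² = σ²/B, B = ηS and SNR = Sρ²/σ², the bound reads 2·exp(−(ζ/2)·SNR) with ζ = η·sin²(π/(2q)).) -/

import Mathlib

open MeasureTheory ProbabilityTheory

/-- The `q`-quantized argument `arg_q(z) = ⌊(q/(2π))·arg(z·e^{iπ/q})⌋`,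
where `arg` is the principal argument taking values in `(−π, π]`. -/
noncomputable def argq (q : ℕ) (z : ℂ) : ℤ :=
  ⌊((q : ℝ) / (2 * Real.pi)) * (z * Complex.exp ((Real.pi : ℂ) * Complex.I / (q : ℂ))).arg⌋

open MeasureTheory ProbabilityTheory Real Complex
open scoped NNReal ENNReal

section aux

lemma gaussianPDFReal_mul_exp' (v : ℝ≥0) (c x : ℝ) :
    gaussianPDFReal 0 v x * Real.exp (c * x)
      = Real.exp (c ^ 2 * v / 2) * gaussianPDFReal (c * v) v x := by
  by_cases hv : (v : ℝ) = 0
  · simp [gaussianPDFReal, hv]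
  · have hv' : (0:ℝ) < v := lt_of_le_of_ne v.coe_nonneg (Ne.symm hv)
    unfold gaussianPDFReal
    rw [mul_assoc, ← Real.exp_add]
    rw [mul_left_comm, mul_assoc, ← Real.exp_add]
    congr 1
    rw [Real.exp_eq_exp]
    field_simp
    ring

lemma gaussian_exp_int' (v : ℝ≥0) (hv : v ≠ 0) (c : ℝ) :
    Integrable (fun x => Real.exp (c * x)) (gaussianReal 0 v) ∧
    ∫ x, Real.exp (c * x) ∂(gaussianReal 0 v) = Real.exp (c ^ 2 * v / 2) := by
  have hrw : gaussianReal 0 v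
      = MeasureTheory.volume.withDensity
          (fun x => ((Real.toNNReal (gaussianPDFReal 0 v x) : ℝ≥0) : ℝ≥0∞)) := by
    rw [gaussianReal_of_var_ne_zero 0 hv]
    rfl
  have fmeas : Measurable fun x => Real.toNNReal (gaussianPDFReal 0 v x) :=
    (measurable_gaussianPDFReal 0 v).real_toNNReal
  have hsmul : ∀ x, (Real.toNNReal (gaussianPDFReal 0 v x)) • Real.exp (c * x)
      = Real.exp (c ^ 2 * v / 2) * gaussianPDFReal (c * v) v x := by
    intro x
    rw [NNReal.smul_def, smul_eq_mul, Real.coe_toNNReal _ (gaussianPDFReal_nonneg 0 v x),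
      gaussianPDFReal_mul_exp']
  constructor
  · rw [hrw, integrable_withDensity_iff_integrable_smul fmeas]
    refine Integrable.congr (((integrable_gaussianPDFReal (c * v) v).const_mul
      (Real.exp (c ^ 2 * v / 2)))) ?_
    filter_upwards with x using (hsmul x).symm
  · rw [hrw, integral_withDensity_eq_integral_smul fmeas]
    simp_rw [hsmul]
    rw [integral_const_mul, integral_gaussianPDFReal_eq_one (c*v) hv, mul_one]

lemma chernoff_prod' (v : ℝ≥0) (hv : v ≠ 0) (a b t lam : ℝ) (hlam : 0 ≤ lam) :
    ((gaussianReal 0 v).prod (gaussianReal 0 v)) {p : ℝ × ℝ | t ≤ a * p.1 + b * p.2}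
      ≤ ENNReal.ofReal (Real.exp (-lam * t + lam ^ 2 * (a ^ 2 + b ^ 2) * v / 2)) := by
  set μ := gaussianReal 0 v
  have h1 := gaussian_exp_int' v hv (lam * a)
  have h2 := gaussian_exp_int' v hv (lam * b)
  have hint : Integrable (fun p : ℝ × ℝ => Real.exp (lam * (a * p.1 + b * p.2))) (μ.prod μ) := by
    have := h1.1.mul_prod h2.1
    refine this.congr ?_
    filter_upwards with p
    rw [← Real.exp_add]
    ring_nf
  have hch := measure_ge_le_exp_mul_mgf (μ := μ.prod μ)
    (X := fun p : ℝ × ℝ => a * p.1 + b * p.2) t hlam hint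
  have hmgf : mgf (fun p : ℝ × ℝ => a * p.1 + b * p.2) (μ.prod μ) lam
      = Real.exp (lam ^ 2 * (a ^ 2 + b ^ 2) * v / 2) := by
    unfold mgf
    have : ∀ p : ℝ × ℝ, Real.exp (lam * (a * p.1 + b * p.2))
        = Real.exp (lam * a * p.1) * Real.exp (lam * b * p.2) := by
      intro p; rw [← Real.exp_add]; ring_nf
    rw [show (fun p : ℝ × ℝ => Real.exp (lam * (a * p.1 + b * p.2)))
        = fun p : ℝ × ℝ => Real.exp (lam * a * p.1) * Real.exp (lam * b * p.2) from funext this]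
    rw [integral_prod_mul (μ := μ) (ν := μ) (fun x => Real.exp (lam * a * x))
      (fun y => Real.exp (lam * b * y)), h1.2, h2.2, ← Real.exp_add]
    congr 1
    ring
  rw [hmgf, ← Real.exp_add] at hch
  have hfin : ((μ.prod μ) {p : ℝ × ℝ | t ≤ a * p.1 + b * p.2}) ≠ ⊤ := measure_ne_top _ _
  calc ((μ.prod μ) {p : ℝ × ℝ | t ≤ a * p.1 + b * p.2})
      = ENNReal.ofReal (((μ.prod μ) {p : ℝ × ℝ | t ≤ a * p.1 + b * p.2}).toReal) :=
        (ENNReal.ofReal_toReal hfin).symm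
    _ ≤ _ := ENNReal.ofReal_le_ofReal hch

lemma chernoff_opt' (v : ℝ≥0) (hv : v ≠ 0) (a b t : ℝ) (ht : 0 ≤ t) (hab : 0 < a ^ 2 + b ^ 2) :
    ((gaussianReal 0 v).prod (gaussianReal 0 v)) {p : ℝ × ℝ | t ≤ a * p.1 + b * p.2}
      ≤ ENNReal.ofReal (Real.exp (-(t ^ 2) / (2 * (a ^ 2 + b ^ 2) * v))) := by
  have hv' : (0:ℝ) < v := lt_of_le_of_ne v.coe_nonneg (fun h => hv (by simpa using h.symm))
  have hlam : 0 ≤ t / ((a ^ 2 + b ^ 2) * v) := by positivity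
  refine (chernoff_prod' v hv a b t _ hlam).trans (le_of_eq ?_)
  congr 1
  rw [Real.exp_eq_exp]
  field_simp
  ring

lemma im_one_add_mul_exp' (u : ℂ) (β : ℝ) (h : 1 + u ≠ 0) :
    ((1 + u) * Complex.exp ((β : ℂ) * Complex.I)).im
      = ‖1 + u‖ * Real.sin (Complex.arg (1 + u) + β) := by
  have habs : ‖1 + u‖ ≠ 0 := norm_ne_zero_iff.mpr h
  have hre : ((1+u)).re = ‖1+u‖ * Real.cos (Complex.arg (1+u)) := by
    rw [Complex.cos_arg h]; field_simp
  have him : ((1+u)).im = ‖1+u‖ * Real.sin (Complex.arg (1+u)) := by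
    rw [Complex.sin_arg]; field_simp
  rw [Complex.mul_im, Complex.exp_ofReal_mul_I_re, Complex.exp_ofReal_mul_I_im,
    Real.sin_add, hre, him]
  ring

lemma im_exp_add' (u : ℂ) (β : ℝ) :
    ((1 + u) * Complex.exp ((β : ℂ) * Complex.I)).im
      = Real.sin β + (u * Complex.exp ((β : ℂ) * Complex.I)).im := by
  rw [add_mul, one_mul, Complex.add_im, Complex.exp_ofReal_mul_I_im]

lemma geom_bad' (z : ℂ) (α : ℝ) (hα : 0 < α) (w : ℂ)
    (h1 : ¬ (Real.sin α ≤ (w * (Complex.exp (((-α : ℝ) : ℂ) * Complex.I) / z)).im))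
    (h2 : ¬ (Real.sin α ≤ -(w * (Complex.exp (((α : ℝ) : ℂ) * Complex.I) / z)).im)) :
    1 + w / z ≠ 0 ∧ |Complex.arg (1 + w / z)| < α := by
  set u := w / z with hu
  have huw : ∀ β : ℝ, (u * Complex.exp ((β : ℂ) * Complex.I)).im
      = (w * (Complex.exp ((β : ℂ) * Complex.I) / z)).im := by
    intro β; rw [hu]; ring_nf
  by_cases h0 : 1 + u = 0
  · exfalso
    apply h1
    have := im_exp_add' u (-α)
    rw [h0, huw (-α)] at this
    rw [zero_mul] at this
    simp only [Complex.zero_im] at this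
    rw [Real.sin_neg] at this
    push_cast at this ⊢
    linarith
  refine ⟨h0, ?_⟩
  by_contra habs
  push_neg at habs
  set θ := Complex.arg (1 + u) with hθ
  have habs' : α ≤ |θ| := habs
  have hρ : 0 < ‖1 + u‖ := by
    exact norm_pos_iff.mpr h0
  by_cases hpos : α ≤ θ
  · apply h1
    have him := im_one_add_mul_exp' u (-α) h0
    have hsin : 0 ≤ Real.sin (θ + -α) := by
      apply Real.sin_nonneg_of_nonneg_of_le_pi
      · linarith
      · have := Complex.arg_le_pi (1 + u); linarith
    have hge : 0 ≤ ((1 + u) * Complex.exp (((-α : ℝ) : ℂ) * Complex.I)).im := by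
      rw [him]; exact mul_nonneg hρ.le hsin
    rw [im_exp_add' u (-α), Real.sin_neg, huw (-α)] at hge
    push_cast at hge ⊢
    linarith
  · have hneg : θ ≤ -α := by
      rcases abs_cases θ with ⟨he, _⟩ | ⟨he, _⟩
      · exact absurd (he ▸ habs') hpos
      · rw [he] at habs'; linarith
    apply h2
    have him := im_one_add_mul_exp' u α h0
    have hsin : Real.sin (θ + α) ≤ 0 := by
      have hp1 : -π ≤ θ + α := by
        have := Complex.neg_pi_lt_arg (1 + u); linarith
      have hp2 : θ + α ≤ 0 := by linarith
      have := Real.sin_nonneg_of_nonneg_of_le_pi (x := -(θ + α)) (by linarith) (by linarith)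
      rw [Real.sin_neg] at this
      linarith
    have hle : ((1 + u) * Complex.exp (((α : ℝ) : ℂ) * Complex.I)).im ≤ 0 := by
      rw [him]; exact mul_nonpos_of_nonneg_of_nonpos hρ.le hsin
    rw [im_exp_add' u α, huw α] at hle
    linarith

lemma argq_spec' (q : ℕ) (hq : 2 ≤ q) (r : ℝ) (hr : 0 < r) (θ : ℝ) :
    ((argq q ((r : ℂ) * Complex.exp ((θ : ℂ) * Complex.I)) : ℤ) : ZMod q)
      = ((⌊(q : ℝ) * θ / (2 * π) + 1 / 2⌋ : ℤ) : ZMod q) := by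
  have hq0 : (q : ℝ) ≠ 0 := by positivity
  have hπ : (0:ℝ) < π := Real.pi_pos
  unfold argq
  have hcoe : (Real.pi : ℂ) * Complex.I / (q : ℂ) = ((π / q : ℝ) : ℂ) * Complex.I := by
    push_cast; ring
  rw [hcoe, mul_assoc, ← Complex.exp_add]
  have hadd : (θ : ℂ) * Complex.I + ((π / q : ℝ) : ℂ) * Complex.I
      = (((θ + π / q : ℝ)) : ℂ) * Complex.I := by push_cast; ring
  rw [hadd, Complex.arg_real_mul _ hr, Complex.arg_exp_mul_I]
  set φ := θ + π / q with hφ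
  set k := toIocDiv (mul_pos two_pos Real.pi_pos) (-π) φ with hk
  have htm : toIocMod (mul_pos two_pos Real.pi_pos) (-π) φ = φ - k * (2 * π) := by
    rw [hk, ← zsmul_eq_mul, self_sub_toIocDiv_zsmul]
  rw [htm]
  have hval : (q : ℝ) / (2 * π) * (φ - k * (2 * π))
      = ((q : ℝ) * θ / (2 * π) + 1 / 2) - (k * q : ℤ) := by
    rw [hφ]; push_cast; field_simp
  rw [hval, Int.floor_sub_intCast]
  push_cast
  simp [ZMod.natCast_self]

lemma good_implies' (q : ℕ) [NeZero q] (hq : 2 ≤ q)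
    (ω : ℂ) (hω : ω = Complex.exp (2 * (Real.pi : ℂ) * Complex.I / (q : ℂ)))
    (z : ℂ) (hz : z ≠ 0) (s : ZMod q) (w w' : ℂ)
    (hB0 : 1 + w / z ≠ 0) (hB : |Complex.arg (1 + w / z)| < π / (2 * q))
    (hA0 : 1 + w' / (z * ω ^ s.val) ≠ 0)
    (hA : |Complex.arg (1 + w' / (z * ω ^ s.val))| < π / (2 * q)) :
    ((argq q ((z * ω ^ s.val + w') / (z + w)) : ℤ) : ZMod q) = s := by
  have hq0 : (q : ℝ) ≠ 0 := by positivity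
  have hπ : (0:ℝ) < π := Real.pi_pos
  have hω0 : ω ≠ 0 := by rw [hω]; exact Complex.exp_ne_zero _
  set z' := z * ω ^ s.val with hz'
  have hz'0 : z' ≠ 0 := mul_ne_zero hz (pow_ne_zero _ hω0)
  set A := 1 + w' / z' with hA'
  set B := 1 + w / z with hB'
  have hnum : z * ω ^ s.val + w' = z' * A := by
    rw [hA']; field_simp; rw [hz']
  have hden : z + w = z * B := by
    rw [hB']; field_simp
  have hratio : (z * ω ^ s.val + w') / (z + w) = ω ^ s.val * (A / B) := by
    rw [hnum, hden, hz']
    field_simp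
  have homega : ω ^ s.val = Complex.exp (((2 * π * s.val / q : ℝ) : ℂ) * Complex.I) := by
    rw [hω, ← Complex.exp_nat_mul]
    congr 1
    push_cast
    field_simp
  have hApol : A = ((‖A‖ : ℝ) : ℂ) * Complex.exp ((Complex.arg A : ℂ) * Complex.I) :=
    (Complex.norm_mul_exp_arg_mul_I A).symm
  have hBpol : B = ((‖B‖ : ℝ) : ℂ) * Complex.exp ((Complex.arg B : ℂ) * Complex.I) :=
    (Complex.norm_mul_exp_arg_mul_I B).symm
  set θA := Complex.arg A with hθA
  set θB := Complex.arg B with hθB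
  have hAabs : (0:ℝ) < ‖A‖ := norm_pos_iff.mpr hA0
  have hBabs : (0:ℝ) < ‖B‖ := norm_pos_iff.mpr hB0
  set r : ℝ := ‖A‖ / ‖B‖ with hr'
  have hr : 0 < r := div_pos hAabs hBabs
  set θ : ℝ := 2 * π * s.val / q + (θA - θB) with hθ'
  have hform : (z * ω ^ s.val + w') / (z + w) = (r : ℂ) * Complex.exp ((θ : ℂ) * Complex.I) := by
    rw [hratio, homega]
    conv_lhs => rw [hApol, hBpol]
    rw [hθ']
    push_cast
    rw [mul_div_mul_comm, ← Complex.exp_sub, mul_left_comm, ← Complex.exp_add]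
    rw [hr']
    push_cast
    ring_nf
  rw [hform, argq_spec' q hq r hr θ]
  have hδ : |θA - θB| < π / q := by
    calc |θA - θB| ≤ |θA| + |θB| := abs_sub _ _
    _ < π / (2 * q) + π / (2 * q) := by apply add_lt_add hA hB
    _ = π / q := by field_simp; ring
  have hfrac : (0:ℝ) ≤ (q : ℝ) * (θA - θB) / (2 * π) + 1 / 2 ∧
      (q : ℝ) * (θA - θB) / (2 * π) + 1 / 2 < 1 := by
    have hb : |(q : ℝ) * (θA - θB) / (2 * π)| < 1 / 2 := by
      rw [abs_div, abs_mul, Nat.abs_cast,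
        _root_.abs_of_nonneg (by positivity : (0:ℝ) ≤ 2 * π), div_lt_iff₀ (by positivity)]
      calc (q : ℝ) * |θA - θB| < (q : ℝ) * (π / q) := by
            apply mul_lt_mul_of_pos_left hδ (by positivity)
        _ = 1 / 2 * (2 * π) := by field_simp
    constructor
    · have := (abs_lt.mp hb).1; linarith
    · have := (abs_lt.mp hb).2; linarith
  have hfloor : ⌊(q : ℝ) * θ / (2 * π) + 1 / 2⌋ = (s.val : ℤ) := by
    have hexpand : (q : ℝ) * θ / (2 * π) + 1 / 2
        = (s.val : ℤ) + ((q : ℝ) * (θA - θB) / (2 * π) + 1 / 2) := by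
      rw [hθ']; push_cast; field_simp; ring
    rw [hexpand, Int.floor_intCast_add]
    rw [Int.floor_eq_zero_iff.mpr ⟨hfrac.1, hfrac.2⟩, add_zero]
  rw [hfloor]
  push_cast
  exact ZMod.natCast_rightInverse s

end aux

/-- per-offset symbol error bound of Proposition 2: if `W, W'` are
independent `CN(0, ν²)` and `z ≠ 0`, then
`ℙ(arg_q((z·ω^s + W')/(z + W)) ≠ s) ≤ 2·exp(−|z|²·sin²(π/(2q))/(2ν²))`. -/
theorem symbol_error_probability_bound
    (q : ℕ) [NeZero q] (hq : 2 ≤ q)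
    (ω : ℂ) (hω : ω = Complex.exp (2 * (Real.pi : ℂ) * Complex.I / (q : ℂ)))
    (ν : ℝ) (hν : 0 < ν) (z : ℂ) (hz : z ≠ 0) (s : ZMod q) :
    (((gaussianReal 0 ((ν ^ 2 / 2).toNNReal)).prod
        (gaussianReal 0 ((ν ^ 2 / 2).toNNReal))).prod
      ((gaussianReal 0 ((ν ^ 2 / 2).toNNReal)).prod
        (gaussianReal 0 ((ν ^ 2 / 2).toNNReal))))
        {p : (ℝ × ℝ) × (ℝ × ℝ) |
          ((argq q ((z * ω ^ s.val + ((p.2.1 : ℂ) + (p.2.2 : ℂ) * Complex.I)) /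
              (z + ((p.1.1 : ℂ) + (p.1.2 : ℂ) * Complex.I))) : ℤ) : ZMod q) ≠ s}
      ≤ ENNReal.ofReal
          (2 * Real.exp (-(‖z‖ ^ 2 * Real.sin (Real.pi / (2 * q)) ^ 2)
            / (2 * ν ^ 2))) := by
  classical
  have hν2 : (ν:ℝ) ≠ 0 := ne_of_gt hν
  set v : ℝ≥0 := (ν ^ 2 / 2).toNNReal with hvdef
  have hvpos : (0:ℝ) < ν ^ 2 / 2 := by positivity
  have hv : v ≠ 0 := by
    rw [hvdef, Ne, Real.toNNReal_eq_zero, not_le]; exact hvpos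
  have hvR : (v : ℝ) = ν ^ 2 / 2 := Real.coe_toNNReal _ hvpos.le
  set μ : Measure ℝ := gaussianReal 0 v with hμ
  set μ2 := μ.prod μ with hμ2
  have hqR : (2:ℝ) ≤ (q:ℝ) := by exact_mod_cast hq
  have hq0 : (0:ℝ) < q := by linarith
  set α : ℝ := π / (2 * q) with hα
  have hαpos : 0 < α := by rw [hα]; positivity
  have hαlt : α < π := by
    rw [hα]
    calc π / (2 * (q:ℝ)) ≤ π / 2 := by
          apply div_le_div_of_nonneg_left Real.pi_pos.le two_pos; linarith
      _ < π := by linarith [Real.pi_pos]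
  set t : ℝ := Real.sin α with htdef
  have ht : 0 < t := Real.sin_pos_of_pos_of_lt_pi hαpos hαlt
  -- |ω| = 1 and z'
  have hωabs : ‖ω‖ = 1 := by
    rw [hω, show (2 * (Real.pi:ℂ) * Complex.I / (q:ℂ)) = ((2*π/q : ℝ):ℂ) * Complex.I by
      push_cast; field_simp]
    exact Complex.norm_exp_ofReal_mul_I _
  have hω0 : ω ≠ 0 := by
    intro h; rw [h] at hωabs; simp at hωabs
  set z' : ℂ := z * ω ^ s.val with hz'def
  have hz'0 : z' ≠ 0 := mul_ne_zero hz (pow_ne_zero _ hω0)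
  have habs' : ‖z'‖ = ‖z‖ := by
    rw [hz'def, norm_mul, norm_pow, hωabs, one_pow, mul_one]
  -- coefficients
  set cm : ℂ := Complex.exp (((-α : ℝ):ℂ) * Complex.I) / z with hcm
  set cp : ℂ := Complex.exp (((α : ℝ):ℂ) * Complex.I) / z with hcp
  set cm' : ℂ := Complex.exp (((-α : ℝ):ℂ) * Complex.I) / z' with hcm'
  set cp' : ℂ := Complex.exp (((α : ℝ):ℂ) * Complex.I) / z' with hcp'
  have hkey : ∀ c : ℂ, c.im^2 + c.re^2 = (‖c‖)^2 := by
    intro c; rw [Complex.sq_norm, Complex.normSq_apply]; ring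
  have hcabs : ∀ (z₀ : ℂ), z₀ ≠ 0 → ∀ β : ℝ,
      ‖Complex.exp ((β:ℂ) * Complex.I) / z₀‖ = 1 / ‖z₀‖ := by
    intro z₀ h β; rw [norm_div, Complex.norm_exp_ofReal_mul_I]
  -- events
  set E1 : Set (ℝ × ℝ) := {p | t ≤ cm.im * p.1 + cm.re * p.2} with hE1
  set E2 : Set (ℝ × ℝ) := {p | t ≤ (-cp.im) * p.1 + (-cp.re) * p.2} with hE2
  set E3 : Set (ℝ × ℝ) := {p | t ≤ cm'.im * p.1 + cm'.re * p.2} with hE3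
  set E4 : Set (ℝ × ℝ) := {p | t ≤ (-cp'.im) * p.1 + (-cp'.re) * p.2} with hE4
  have hWim : ∀ (w : ℝ × ℝ) (c : ℂ), (((w.1:ℂ) + (w.2:ℂ) * Complex.I) * c).im
      = c.im * w.1 + c.re * w.2 := by
    intro w c
    simp [Complex.mul_im, Complex.add_im, Complex.add_re, Complex.mul_re]
    ring
  -- inclusion
  have hincl : {p : (ℝ × ℝ) × (ℝ × ℝ) |
      ((argq q ((z * ω ^ s.val + ((p.2.1 : ℂ) + (p.2.2 : ℂ) * Complex.I)) /
          (z + ((p.1.1 : ℂ) + (p.1.2 : ℂ) * Complex.I))) : ℤ) : ZMod q) ≠ s}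
      ⊆ (E1 ×ˢ Set.univ) ∪ ((E2 ×ˢ Set.univ) ∪ ((Set.univ ×ˢ E3) ∪ (Set.univ ×ˢ E4))) := by
    intro p hp
    by_contra hnot
    simp only [Set.mem_union, not_or, Set.mem_prod, Set.mem_univ, and_true, true_and,
      hE1, hE2, hE3, hE4, Set.mem_setOf_eq, not_le] at hnot
    obtain ⟨h1, h2, h3, h4⟩ := hnot
    set W : ℂ := (p.1.1 : ℂ) + (p.1.2 : ℂ) * Complex.I with hW
    set W' : ℂ := (p.2.1 : ℂ) + (p.2.2 : ℂ) * Complex.I with hW'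
    have hg1 : 1 + W / z ≠ 0 ∧ |Complex.arg (1 + W / z)| < α := by
      apply geom_bad' z α hαpos W
      · rw [hW, hWim p.1 cm, ← htdef]; exact not_le.mpr h1
      · rw [hW, hWim p.1 cp, ← htdef]; push_neg; linarith [h2]
    have hg2 : 1 + W' / z' ≠ 0 ∧ |Complex.arg (1 + W' / z')| < α := by
      apply geom_bad' z' α hαpos W'
      · rw [hW', hWim p.2 cm', ← htdef]; exact not_le.mpr h3
      · rw [hW', hWim p.2 cp', ← htdef]; push_neg; linarith [h4]
    exact hp (good_implies' q hq ω hω z hz s W W' hg1.1 hg1.2 hg2.1 hg2.2)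
  -- probability bounds
  set E0 : ℝ := Real.exp (-(‖z‖ ^ 2 * t ^ 2) / ν ^ 2) with hE0
  have hcmne : cm ≠ 0 := div_ne_zero (Complex.exp_ne_zero _) hz
  have hcpne : cp ≠ 0 := div_ne_zero (Complex.exp_ne_zero _) hz
  have hcm'ne : cm' ≠ 0 := div_ne_zero (Complex.exp_ne_zero _) hz'0
  have hcp'ne : cp' ≠ 0 := div_ne_zero (Complex.exp_ne_zero _) hz'0
  have hzabs : (0:ℝ) < ‖z‖ := norm_pos_iff.mpr hz
  have hbound : ∀ (c : ℂ), ‖c‖ = 1 / ‖z‖ → ∀ (a b : ℝ),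
      a^2 + b^2 = c.im^2 + c.re^2 →
      μ2 {p : ℝ × ℝ | t ≤ a * p.1 + b * p.2} ≤ ENNReal.ofReal E0 := by
    intro c hc a b hab
    have habs2 : a^2 + b^2 = 1 / ‖z‖ ^ 2 := by
      rw [hab, hkey, hc, div_pow, one_pow]
    have habpos : 0 < a^2 + b^2 := by rw [habs2]; positivity
    refine (chernoff_opt' v hv a b t ht.le habpos).trans (le_of_eq ?_)
    congr 1
    rw [hE0, Real.exp_eq_exp, habs2, hvR]
    field_simp
  have hb1 : μ2 E1 ≤ ENNReal.ofReal E0 := hbound cm (hcabs z hz _) _ _ rfl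
  have hb2 : μ2 E2 ≤ ENNReal.ofReal E0 := by
    refine hbound cp (hcabs z hz _) _ _ ?_
    ring
  have hb3 : μ2 E3 ≤ ENNReal.ofReal E0 := by
    refine hbound cm' (by rw [hcabs z' hz'0 _, habs']) _ _ rfl
  have hb4 : μ2 E4 ≤ ENNReal.ofReal E0 := by
    refine hbound cp' (by rw [hcabs z' hz'0 _, habs']) _ _ ?_
    ring
  -- put together
  have hmeas : (μ2.prod μ2) {p : (ℝ × ℝ) × (ℝ × ℝ) |
      ((argq q ((z * ω ^ s.val + ((p.2.1 : ℂ) + (p.2.2 : ℂ) * Complex.I)) /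
          (z + ((p.1.1 : ℂ) + (p.1.2 : ℂ) * Complex.I))) : ℤ) : ZMod q) ≠ s}
      ≤ ENNReal.ofReal E0 + (ENNReal.ofReal E0 + (ENNReal.ofReal E0 + ENNReal.ofReal E0)) := by
    refine (measure_mono hincl).trans ?_
    refine (measure_union_le _ _).trans ?_
    refine add_le_add ?_ ?_
    · rw [Measure.prod_prod, measure_univ, mul_one]; exact hb1
    refine (measure_union_le _ _).trans ?_
    refine add_le_add ?_ ?_
    · rw [Measure.prod_prod, measure_univ, mul_one]; exact hb2
    refine (measure_union_le _ _).trans ?_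
    refine add_le_add ?_ ?_
    · rw [Measure.prod_prod, measure_univ, one_mul]; exact hb3
    · rw [Measure.prod_prod, measure_univ, one_mul]; exact hb4
  -- final numeric comparison
  set X : ℝ := ‖z‖ ^ 2 * t ^ 2 with hX
  have hXnn : 0 ≤ X := by positivity
  have hE0nn : 0 ≤ E0 := Real.exp_nonneg _
  have hhalf : Real.exp (-Real.log 2) = 1/2 := by
    rw [Real.exp_neg, Real.exp_log two_pos]
    norm_num
  have hEu : E0 = Real.exp (-X / (2 * ν^2)) * Real.exp (-X / (2 * ν^2)) := by
    rw [hE0, ← Real.exp_add]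
    congr 1
    field_simp
    ring
  by_cases hcase : X / ν ^ 2 ≤ 2 * Real.log 2
  · refine le_trans prob_le_one ?_
    rw [show (1 : ℝ≥0∞) = ENNReal.ofReal 1 by simp]
    apply ENNReal.ofReal_le_ofReal
    have hmono : Real.exp (-Real.log 2) ≤ Real.exp (-X / (2 * ν^2)) := by
      apply Real.exp_le_exp.mpr
      have h2 : -X / (2 * ν^2) = -((X / ν^2)/2) := by field_simp
      rw [h2]
      rw [div_le_iff₀ (by positivity : (0:ℝ) < ν ^ 2)] at hcase
      have : X / ν ^ 2 ≤ 2 * Real.log 2 := by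
        rw [div_le_iff₀ (by positivity : (0:ℝ) < ν ^ 2)]; linarith
      linarith
    rw [hhalf] at hmono
    linarith
  · refine hmeas.trans ?_
    rw [← ENNReal.ofReal_add hE0nn hE0nn, ← ENNReal.ofReal_add hE0nn (by linarith),
      ← ENNReal.ofReal_add hE0nn (by linarith)]
    apply ENNReal.ofReal_le_ofReal
    push_neg at hcase
    have hu : Real.exp (-X / (2 * ν^2)) ≤ 1/2 := by
      rw [← hhalf]
      apply Real.exp_le_exp.mpr
      have h2 : -X / (2 * ν^2) = -((X / ν^2)/2) := by field_simp
      rw [h2]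
      linarith
    nlinarith [Real.exp_pos (-X / (2 * ν^2)), hEu]
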